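/- arXiv:2101.11411 — 6 statements merged into one kernel-verified Lean document; each statement's English description precedes it below -/
import Mathlib

section
/- Let M : ℕ → ℝ be a weight sequence in the class LC. Then the following are equivalent: (i) M has moderate growth (mg); (ii) there exists A ≥ 1 such that M_{2p} ≤ A^{2p}·(M_p)² for all p ∈ ℕ; (iii) sup_{p ∈ ℕ, p ≥ 1} μ_{2p}/μ_p < +∞; (iv) there exists A ≥ 1 such that μ_p ≤ A·(M_p)^{1/p} for all p ≥ 1. -/
open Filter Real Asymptotics

/-- The associated weight function of a weight sequence `M`. -/
noncomputable def omegaM (M : ℕ → ℝ) (t : ℝ) : ℝ :=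
  if t = 0 then 0 else ⨆ p : ℕ, Real.log (t ^ p / M p)

/-- The class `LC`: positive, normalized, log-convex weight sequences whose
`p`-th roots tend to infinity. -/
def IsLC (M : ℕ → ℝ) : Prop :=
  (∀ p, 0 < M p) ∧ M 0 = 1 ∧ M 0 ≤ M 1 ∧
  (∀ p : ℕ, 1 ≤ p → (M p) ^ 2 ≤ M (p - 1) * M (p + 1)) ∧
  Filter.Tendsto (fun p : ℕ => (M p) ^ (1 / (p : ℝ))) Filter.atTop Filter.atTop

/-- The quotient sequence `μ_0 = 1`, `μ_p = M_p / M_{p-1}`. -/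
noncomputable def mu (M : ℕ → ℝ) (p : ℕ) : ℝ :=
  if p = 0 then 1 else M p / M (p - 1)

/-- Moderate growth `(mg)`. -/
def HasMG (M : ℕ → ℝ) : Prop :=
  ∃ C : ℝ, 1 ≤ C ∧ ∀ p q : ℕ, M (p + q) ≤ C ^ (p + q) * M p * M q

/-- `m_p := M_p / p!`. -/
noncomputable def mseq (M : ℕ → ℝ) (p : ℕ) : ℝ := M p / (Nat.factorial p)

/-- Young conjugate of `x ↦ ω_M(eˣ)`. -/
noncomputable def phiStar (M : ℕ → ℝ) (y : ℝ) : ℝ :=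
  sSup ((fun x => x * y - omegaM M (Real.exp x)) '' Set.Ici (0 : ℝ))

/-- The weight matrix associated with `ω_M`: `M^{(l)}_p := exp((1/l)·φ*(l·p))`. -/
noncomputable def MMat (M : ℕ → ℝ) (l : ℝ) (p : ℕ) : ℝ :=
  Real.exp ((1 / l) * phiStar M (l * p))

/-- `m^{(l)}_p := M^{(l)}_p / p!`. -/
noncomputable def mMat (M : ℕ → ℝ) (l : ℝ) (p : ℕ) : ℝ :=
  MMat M l p / (Nat.factorial p)

/-- The Roumieu root-almost-increasing condition `(M_{rai})` for the weight matrix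
associated with `ω_M`. -/
def MRai (M : ℕ → ℝ) : Prop :=
  ∀ x : ℝ, 0 < x → ∃ C : ℝ, 0 < C ∧ ∃ y : ℝ, 0 < y ∧
    ∀ p q : ℕ, 1 ≤ p → p ≤ q →
      (mMat M x p) ^ (1 / (p : ℝ)) ≤ C * (mMat M y q) ^ (1 / (q : ℝ))

/-- `M ≼ N` : `sup_{p ≥ 1} (M_p/N_p)^{1/p} < ∞`. -/
def Precsim (M N : ℕ → ℝ) : Prop :=
  ∃ A : ℝ, ∀ p : ℕ, 1 ≤ p → (M p / N p) ^ (1 / (p : ℝ)) ≤ A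

/-- `M ≈ N` : mutual `≼`. -/
def Approx (M N : ℕ → ℝ) : Prop := Precsim M N ∧ Precsim N M

/-- Condition `(ω1)` for a weight function. -/
def Omega1 (w : ℝ → ℝ) : Prop :=
  ∃ L : ℝ, 1 ≤ L ∧ ∀ t : ℝ, 0 ≤ t → w (2 * t) ≤ L * (w t + 1)

/-- Condition `(α0)` (in the rewritten form valid for all `t ≥ 0`). -/
def Alpha0 (w : ℝ → ℝ) : Prop :=
  ∃ C : ℝ, 1 ≤ C ∧ ∃ D : ℝ, 1 ≤ D ∧ ∀ lam : ℝ, 1 ≤ lam → ∀ t : ℝ, 0 ≤ t →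
    w (lam * t) ≤ C * lam * w t + D * lam



section Aux
variable {M : ℕ → ℝ} (hpos : ∀ p, 0 < M p) (h0 : M 0 = 1) (h01 : M 0 ≤ M 1)
  (hconv : ∀ p : ℕ, 1 ≤ p → (M p) ^ 2 ≤ M (p - 1) * M (p + 1))

lemma mu_succ (n : ℕ) : mu M (n + 1) = M (n + 1) / M n := by simp [mu]

include hpos in
lemma mu_pos (p : ℕ) : 0 < mu M p := by
  cases p with
  | zero => simp [mu]
  | succ n => rw [mu_succ]; exact div_pos (hpos _) (hpos _)

include hpos in
lemma M_succ (n : ℕ) : M (n + 1) = M n * mu M (n + 1) := by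
  rw [mu_succ, mul_div_cancel₀ _ (hpos n).ne']

include hpos h0 h01 hconv in
lemma mu_mono : Monotone (mu M) := by
  apply monotone_nat_of_le_succ
  intro n
  cases n with
  | zero =>
    show mu M 0 ≤ mu M 1
    rw [show mu M 0 = 1 by simp [mu], mu_succ, le_div_iff₀ (hpos 0), h0, one_mul]
    simpa [h0] using h01
  | succ m =>
    have h := hconv (m + 1) (by omega)
    simp only [Nat.add_sub_cancel] at h
    rw [mu_succ, mu_succ, div_le_div_iff₀ (hpos _) (hpos _)]
    nlinarith [hpos m, hpos (m+1), hpos (m+2)]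

include hpos h0 h01 hconv in
lemma one_le_mu (p : ℕ) : 1 ≤ mu M p := by
  have := mu_mono hpos h0 h01 hconv (Nat.zero_le p)
  simpa [mu] using this

include hpos h0 h01 hconv in
lemma lemA (q p : ℕ) : M (p + q) ≤ M p * (mu M (p + q)) ^ q := by
  induction q with
  | zero => simp
  | succ q ih =>
    have e : p + (q + 1) = (p + q) + 1 := by omega
    rw [e, M_succ hpos (p + q)]
    have h1 : M (p + q) ≤ M p * mu M (p + q) ^ q := ih
    have h2 : mu M (p + q) ^ q ≤ mu M (p + q + 1) ^ q :=
      pow_le_pow_left₀ (mu_pos hpos _).le (mu_mono hpos h0 h01 hconv (by omega)) q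
    have hμ := mu_pos hpos (p + q + 1)
    calc M (p + q) * mu M (p + q + 1)
        ≤ (M p * mu M (p + q + 1) ^ q) * mu M (p + q + 1) := by
          apply mul_le_mul_of_nonneg_right _ hμ.le
          exact h1.trans (mul_le_mul_of_nonneg_left h2 (hpos p).le)
      _ = M p * mu M (p + q + 1) ^ (q + 1) := by ring

include hpos h0 h01 hconv in
lemma lemB (q p : ℕ) : M p * (mu M (p + 1)) ^ q ≤ M (p + q) := by
  induction q with
  | zero => simp
  | succ q ih =>
    have e : p + (q + 1) = (p + q) + 1 := by omega
    rw [e, M_succ hpos (p + q)]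
    have h2 : mu M (p + 1) ≤ mu M (p + q + 1) := mu_mono hpos h0 h01 hconv (by omega)
    calc M p * mu M (p + 1) ^ (q + 1) = (M p * mu M (p + 1) ^ q) * mu M (p + 1) := by ring
      _ ≤ M (p + q) * mu M (p + q + 1) := by
          apply mul_le_mul ih h2 (mu_pos hpos _).le (hpos _).le

include hpos h0 h01 hconv in
lemma one_le_M (p : ℕ) : 1 ≤ M p := by
  have := lemB hpos h0 h01 hconv p 0
  simp only [Nat.zero_add] at this
  refine le_trans ?_ this
  rw [h0, one_mul]
  exact one_le_pow₀ (one_le_mu hpos h0 h01 hconv 1)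

include hpos h0 h01 hconv in
lemma lemC : ∀ k a b : ℕ, k ≤ a → a ≤ b → M a * M b ≤ M (a - k) * M (b + k) := by
  intro k
  induction k with
  | zero => intro a b _ _; simp
  | succ k ih =>
    intro a b hk hab
    have step : M (a - k) * M (b + k) ≤ M (a - (k + 1)) * M (b + (k + 1)) := by
      obtain ⟨m, hm⟩ : ∃ m, a - k = m + 1 := ⟨a - (k+1), by omega⟩
      have e1 : a - (k + 1) = m := by omega
      have e2 : b + (k + 1) = (b + k) + 1 := by omega
      rw [hm, e1, e2, M_succ hpos m, M_succ hpos (b + k)]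
      have hμ : mu M (m + 1) ≤ mu M (b + k + 1) := mu_mono hpos h0 h01 hconv (by omega)
      have := mu_pos hpos (m + 1)
      nlinarith [mul_le_mul_of_nonneg_left hμ (mul_nonneg (hpos m).le (hpos (b + k)).le),
        hpos m, hpos (b + k)]
    exact (ih a b (by omega) hab).trans step

include hpos h0 h01 hconv in
lemma Mmid (p q : ℕ) : M (p + q) ^ 2 ≤ M (2 * p) * M (2 * q) := by
  rcases le_total p q with h | h
  · have := lemC hpos h0 h01 hconv (q - p) (p + q) (p + q) (by omega) le_rfl
    have e1 : p + q - (q - p) = 2 * p := by omega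
    have e2 : p + q + (q - p) = 2 * q := by omega
    rw [e1, e2] at this
    nlinarith [this]
  · have := lemC hpos h0 h01 hconv (p - q) (p + q) (p + q) (by omega) le_rfl
    have e1 : p + q - (p - q) = 2 * q := by omega
    have e2 : p + q + (p - q) = 2 * p := by omega
    rw [e1, e2] at this
    nlinarith [this]

end Aux

/-- Lemma 2.1: equivalent reformulations of moderate growth. -/
theorem stmt0 (M : ℕ → ℝ) (hM : IsLC M) :
    List.TFAE [
      HasMG M,
      ∃ A : ℝ, 1 ≤ A ∧ ∀ p : ℕ, M (2 * p) ≤ A ^ (2 * p) * (M p) ^ 2,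
      ∃ S : ℝ, ∀ p : ℕ, 1 ≤ p → mu M (2 * p) / mu M p ≤ S,
      ∃ A : ℝ, 1 ≤ A ∧ ∀ p : ℕ, 1 ≤ p → mu M p ≤ A * (M p) ^ (1 / (p : ℝ))] := by
  obtain ⟨hpos, h0, h01, hconv, -⟩ := hM
  have hμpos := mu_pos (M := M) hpos
  have hμmono := mu_mono hpos h0 h01 hconv
  have hμ1 := one_le_mu hpos h0 h01 hconv
  have hM1 := one_le_M hpos h0 h01 hconv
  tfae_have 1 → 2 := by
    rintro ⟨C, hC1, hC⟩
    refine ⟨C, hC1, fun p => ?_⟩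
    have := hC p p
    rw [two_mul]
    calc M (p + p) ≤ C ^ (p + p) * M p * M p := this
      _ = C ^ (p + p) * M p ^ 2 := by ring
  tfae_have 2 → 1 := by
    rintro ⟨A, hA1, hA⟩
    refine ⟨A, hA1, fun p q => ?_⟩
    have hmid := Mmid hpos h0 h01 hconv p q
    have h2p := hA p
    have h2q := hA q
    have hApos : (0:ℝ) < A := lt_of_lt_of_le one_pos hA1
    have key : M (p + q) ^ 2 ≤ (A ^ (p + q) * M p * M q) ^ 2 := by
      calc M (p + q) ^ 2 ≤ M (2 * p) * M (2 * q) := hmid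
        _ ≤ (A ^ (2 * p) * M p ^ 2) * (A ^ (2 * q) * M q ^ 2) := by
            apply mul_le_mul h2p h2q (hpos _).le
            positivity
        _ = (A ^ (p + q) * M p * M q) ^ 2 := by ring
    nlinarith [hpos (p + q), hpos p, hpos q, pow_pos hApos (p + q),
      mul_pos (mul_pos (pow_pos hApos (p + q)) (hpos p)) (hpos q)]
  tfae_have 2 → 3 := by
    rintro ⟨A, hA1, hA⟩
    have hApos : (0:ℝ) < A := lt_of_lt_of_le one_pos hA1
    refine ⟨A ^ 3, fun p hp => ?_⟩
    -- μ_{2p}^{2p} ≤ M(4p)/M(2p) ≤ A^{6p} M_p^2 ≤ (A^3 μ_p)^{2p}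
    have k1 : M p ≤ mu M p ^ p := by
      have := lemA hpos h0 h01 hconv p 0
      simpa [h0] using this
    have k2 : M (2 * p) * mu M (2 * p) ^ (2 * p) ≤ M (2 * (2 * p)) := by
      have hb := lemB hpos h0 h01 hconv (2 * p) (2 * p)
      have e : 2 * p + 2 * p = 2 * (2 * p) := by omega
      rw [e] at hb
      refine le_trans ?_ hb
      apply mul_le_mul_of_nonneg_left _ (hpos _).le
      exact pow_le_pow_left₀ (hμpos _).le (hμmono (by omega)) _
    have k3 : M (2 * (2 * p)) ≤ A ^ (2 * (2 * p)) * (A ^ (2 * p) * M p ^ 2) * M (2 * p) := by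
      calc M (2 * (2 * p)) ≤ A ^ (2 * (2 * p)) * M (2 * p) ^ 2 := hA (2 * p)
        _ = A ^ (2 * (2 * p)) * M (2 * p) * M (2 * p) := by ring
        _ ≤ A ^ (2 * (2 * p)) * (A ^ (2 * p) * M p ^ 2) * M (2 * p) := by
            apply mul_le_mul_of_nonneg_right _ (hpos _).le
            exact mul_le_mul_of_nonneg_left (hA p) (by positivity)
    have k4 : mu M (2 * p) ^ (2 * p) ≤ (A ^ 3 * mu M p) ^ (2 * p) := by
      have hMp2 : M p ^ 2 ≤ (mu M p ^ p) ^ 2 := by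
        apply pow_le_pow_left₀ (hpos p).le k1
      have : M (2 * p) * mu M (2 * p) ^ (2 * p) ≤
          A ^ (2 * (2 * p)) * (A ^ (2 * p) * M p ^ 2) * M (2 * p) := k2.trans k3
      have h5 : mu M (2 * p) ^ (2 * p) ≤ A ^ (2 * (2 * p)) * (A ^ (2 * p) * M p ^ 2) := by
        have hMpos := hpos (2 * p)
        calc mu M (2 * p) ^ (2 * p)
            = (M (2 * p) * mu M (2 * p) ^ (2 * p)) / M (2 * p) := by
              field_simp
          _ ≤ (A ^ (2 * (2 * p)) * (A ^ (2 * p) * M p ^ 2) * M (2 * p)) / M (2 * p) := by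
              gcongr
          _ = A ^ (2 * (2 * p)) * (A ^ (2 * p) * M p ^ 2) := by
              field_simp
      calc mu M (2 * p) ^ (2 * p) ≤ A ^ (2 * (2 * p)) * (A ^ (2 * p) * M p ^ 2) := h5
        _ ≤ A ^ (2 * (2 * p)) * (A ^ (2 * p) * (mu M p ^ p) ^ 2) := by
            apply mul_le_mul_of_nonneg_left _ (by positivity)
            exact mul_le_mul_of_nonneg_left hMp2 (by positivity)
        _ = (A ^ 3 * mu M p) ^ (2 * p) := by ring
    have hle : mu M (2 * p) ≤ A ^ 3 * mu M p := by
      have h2p0 : 2 * p ≠ 0 := by omega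
      exact (pow_le_pow_iff_left₀ (hμpos _).le
        (mul_nonneg (by positivity) (hμpos p).le) h2p0).mp k4
    rw [div_le_iff₀ (hμpos p)]
    calc mu M (2 * p) ≤ A ^ 3 * mu M p := hle
      _ = A ^ 3 * mu M p := rfl
  tfae_have 3 → 2 := by
    rintro ⟨S, hS⟩
    set A := max S 1 with hA
    have hA1 : (1:ℝ) ≤ A := le_max_right _ _
    have hmu2 : ∀ p : ℕ, 1 ≤ p → mu M (2 * p) ≤ A * mu M p := by
      intro p hp
      have := (div_le_iff₀ (hμpos p)).mp (hS p hp)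
      calc mu M (2 * p) ≤ S * mu M p := this
        _ ≤ A * mu M p := mul_le_mul_of_nonneg_right (le_max_left _ _) (hμpos p).le
    refine ⟨A, hA1, fun p => ?_⟩
    induction p with
    | zero => simp [h0]
    | succ p ih =>
      have e : 2 * (p + 1) = 2 * p + 1 + 1 := by omega
      have hstep : mu M (2 * p + 2) ≤ A * mu M (p + 1) := by
        have := hmu2 (p + 1) (by omega)
        rwa [show 2 * (p + 1) = 2 * p + 2 by omega] at this
      have hstep' : mu M (2 * p + 1) ≤ A * mu M (p + 1) :=
        le_trans (hμmono (by omega)) hstep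
      rw [e, M_succ hpos (2 * p + 1), M_succ hpos (2 * p)]
      calc M (2 * p) * mu M (2 * p + 1) * mu M (2 * p + 1 + 1)
          ≤ (A ^ (2 * p) * M p ^ 2) * (A * mu M (p + 1)) * (A * mu M (p + 1)) := by
            have hnn1 : (0:ℝ) ≤ A ^ (2 * p) * M p ^ 2 := by positivity
            have hnn2 : (0:ℝ) ≤ A * mu M (p + 1) :=
              mul_nonneg (by linarith) (hμpos _).le
            apply mul_le_mul _ _ (hμpos _).le (mul_nonneg hnn1 hnn2)
            · exact mul_le_mul ih hstep' (hμpos _).le hnn1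
            · simpa using hstep
        _ = A ^ (2 * p + 1 + 1) * (M p * mu M (p + 1)) ^ 2 := by ring
        _ = A ^ (2 * p + 1 + 1) * M (p + 1) ^ 2 := by rw [← M_succ hpos p]
  tfae_have 2 → 4 := by
    rintro ⟨A, hA1, hA⟩
    have hApos : (0:ℝ) < A := lt_of_lt_of_le one_pos hA1
    refine ⟨A ^ 2, one_le_pow₀ hA1, fun p hp => ?_⟩
    have hp0 : p ≠ 0 := by omega
    have key : mu M p ^ p ≤ A ^ (2 * p) * M p := by
      have hb := lemB hpos h0 h01 hconv p p
      have e : p + p = 2 * p := by omega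
      rw [e] at hb
      have h1 : M p * mu M p ^ p ≤ M (2 * p) := by
        refine le_trans ?_ hb
        apply mul_le_mul_of_nonneg_left _ (hpos p).le
        exact pow_le_pow_left₀ (hμpos _).le (hμmono (by omega)) _
      have h2 : M p * mu M p ^ p ≤ A ^ (2 * p) * M p ^ 2 := h1.trans (hA p)
      have hMpos := hpos p
      calc mu M p ^ p = (M p * mu M p ^ p) / M p := by field_simp
        _ ≤ (A ^ (2 * p) * M p ^ 2) / M p := by gcongr
        _ = A ^ (2 * p) * M p := by field_simp
    have hrhs : (A ^ 2 * M p ^ (1 / (p:ℝ))) ^ p = A ^ (2 * p) * M p := by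
      rw [mul_pow, one_div, Real.rpow_inv_natCast_pow (hpos p).le hp0, ← pow_mul,
        mul_comm 2 p, pow_mul, ← pow_mul, mul_comm p 2]
    have : mu M p ^ p ≤ (A ^ 2 * M p ^ (1 / (p:ℝ))) ^ p := by rw [hrhs]; exact key
    exact (pow_le_pow_iff_left₀ (hμpos p).le
      (mul_nonneg (by positivity) (Real.rpow_nonneg (hpos p).le _)) hp0).mp this
  tfae_have 4 → 2 := by
    rintro ⟨A, hA1, hA⟩
    have hApos : (0:ℝ) < A := lt_of_lt_of_le one_pos hA1
    refine ⟨A, hA1, fun p => ?_⟩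
    rcases Nat.eq_zero_or_pos p with rfl | hp
    · simp [h0]
    have h2p0 : (2 * p : ℕ) ≠ 0 := by omega
    have hMpos := hpos (2 * p)
    have h1 : M (2 * p) ≤ M p * mu M (2 * p) ^ p := by
      have := lemA hpos h0 h01 hconv p p
      rwa [show p + p = 2 * p by omega] at this
    have h2 : mu M (2 * p) ≤ A * M (2 * p) ^ (1 / ((2 * p : ℕ) : ℝ)) := hA (2 * p) (by omega)
    have hroot : (M (2 * p) ^ (1 / ((2 * p : ℕ) : ℝ))) ^ p = M (2 * p) ^ ((1:ℝ)/2) := by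
      rw [← Real.rpow_natCast (M (2 * p) ^ (1 / ((2 * p : ℕ) : ℝ))) p,
        ← Real.rpow_mul hMpos.le]
      congr 1
      have hpne : (p : ℝ) ≠ 0 := Nat.cast_ne_zero.mpr (by omega)
      push_cast
      field_simp
    set s : ℝ := M (2 * p) ^ ((1:ℝ)/2) with hs
    have hspos : 0 < s := Real.rpow_pos_of_pos hMpos _
    have hss : s * s = M (2 * p) := by
      rw [hs, ← Real.rpow_add hMpos]
      norm_num
    have h3 : M (2 * p) ≤ M p * (A ^ p * s) := by
      calc M (2 * p) ≤ M p * mu M (2 * p) ^ p := h1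
        _ ≤ M p * (A * M (2 * p) ^ (1 / ((2 * p : ℕ) : ℝ))) ^ p := by
            apply mul_le_mul_of_nonneg_left _ (hpos p).le
            exact pow_le_pow_left₀ (hμpos _).le h2 p
        _ = M p * (A ^ p * s) := by rw [mul_pow, hroot]
    have h4 : s ≤ A ^ p * M p := by
      have : s * s ≤ (A ^ p * M p) * s := by
        rw [hss]
        calc M (2 * p) ≤ M p * (A ^ p * s) := h3
          _ = (A ^ p * M p) * s := by ring
      exact le_of_mul_le_mul_right (by linarith [this]) hspos
    calc M (2 * p) = s * s := hss.symm
      _ ≤ (A ^ p * M p) * (A ^ p * M p) :=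
          mul_le_mul h4 h4 hspos.le (mul_nonneg (by positivity) (hpos p).le)
      _ = A ^ (2 * p) * M p ^ 2 := by ring
  tfae_finish
end

section
/- Let N : ℕ → ℝ be a weight sequence in the class LC and let C ≥ 2 be an integer. Then L^C ≼ N, i.e. there exists A ≥ 1 such that (N_{Cp})^{1/C} ≤ A^p·N_p for all p ≥ 1, holds if and only if N has moderate growth (mg). Consequently, N ≈ L^C for some (equivalently every) integer C ≥ 2 if and only if N has (mg). -/
open Filter Real Asymptotics

lemma sum3 (d : ℕ → ℝ) (hmono : Monotone d) (hd0 : 0 ≤ d 0) {a b : ℕ} (hab : a ≤ b) :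
    (b:ℝ) * ∑ k ∈ Finset.range a, d k ≤ (a:ℝ) * ∑ k ∈ Finset.range b, d k := by
  have hdnn : ∀ k, 0 ≤ d k := fun k => hd0.trans (hmono (Nat.zero_le k))
  have hsplit : ∑ k ∈ Finset.range b, d k
      = ∑ k ∈ Finset.range a, d k + ∑ k ∈ Finset.Ico a b, d k := by
    rw [Finset.range_eq_Ico, Finset.range_eq_Ico]
    exact (Finset.sum_Ico_consecutive d (Nat.zero_le a) hab).symm
  have h1 : ∑ k ∈ Finset.range a, d k ≤ (a:ℝ) * d a := by
    calc ∑ k ∈ Finset.range a, d k ≤ ∑ _k ∈ Finset.range a, d a :=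
          Finset.sum_le_sum fun k hk => hmono (Finset.mem_range.mp hk).le
      _ = a * d a := by rw [Finset.sum_const, Finset.card_range, nsmul_eq_mul]
  have h2 : ((b:ℝ) - a) * d a ≤ ∑ k ∈ Finset.Ico a b, d k := by
    calc ((b:ℝ) - a) * d a = ∑ _k ∈ Finset.Ico a b, d a := by
          rw [Finset.sum_const, Nat.card_Ico, nsmul_eq_mul, Nat.cast_sub hab]
      _ ≤ ∑ k ∈ Finset.Ico a b, d k :=
          Finset.sum_le_sum fun k hk => hmono (Finset.mem_Ico.mp hk).1
  have hba : (0:ℝ) ≤ (b:ℝ) - a := by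
    have : (a:ℝ) ≤ b := by exact_mod_cast hab
    linarith
  have h3 := mul_le_mul_of_nonneg_left h1 hba
  have h4 := mul_le_mul_of_nonneg_left h2 (Nat.cast_nonneg a : (0:ℝ) ≤ a)
  rw [hsplit]
  nlinarith [h3, h4]

lemma sum2 (d : ℕ → ℝ) (hmono : Monotone d) {p q : ℕ} (hpq : p ≤ q) :
    2 * ∑ k ∈ Finset.range (p+q), d k ≤
      ∑ k ∈ Finset.range (2*p), d k + ∑ k ∈ Finset.range (2*q), d k := by
  have e1 : ∑ k ∈ Finset.Ico (2*p) (p+q), d k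
      = ∑ k ∈ Finset.range (p+q), d k - ∑ k ∈ Finset.range (2*p), d k :=
    Finset.sum_Ico_eq_sub _ (by omega)
  have e2 : ∑ k ∈ Finset.Ico (p+q) (2*q), d k
      = ∑ k ∈ Finset.range (2*q), d k - ∑ k ∈ Finset.range (p+q), d k :=
    Finset.sum_Ico_eq_sub _ (by omega)
  have hle : ∑ k ∈ Finset.Ico (2*p) (p+q), d k ≤ ∑ k ∈ Finset.Ico (p+q) (2*q), d k := by
    rw [Finset.sum_Ico_eq_sum_range, Finset.sum_Ico_eq_sum_range]
    have hc : p + q - 2*p = 2*q - (p+q) := by omega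
    rw [hc]
    exact Finset.sum_le_sum fun i _ => hmono (by omega)
  linarith

/-- Lemma 2.2 (ii): `L^C ≼ N` iff `(mg)`; consequently `N ≈ L^C` iff `(mg)`. -/
theorem stmt2 (N : ℕ → ℝ) (hN : IsLC N) (C : ℕ) (hC : 2 ≤ C) :
    ((∃ A : ℝ, 1 ≤ A ∧ ∀ p : ℕ, 1 ≤ p →
        (N (C * p)) ^ (1 / (C : ℝ)) ≤ A ^ p * N p) ↔ HasMG N) ∧
    (Approx N (fun p => (N (C * p)) ^ (1 / (C : ℝ))) ↔ HasMG N) := by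
  obtain ⟨hpos, h0, h01, hlc, -⟩ := hN
  have hC0 : (0:ℝ) < C := by exact_mod_cast (by omega : 0 < C)
  set f : ℕ → ℝ := fun p => Real.log (N p) with hf
  set d : ℕ → ℝ := fun p => f (p+1) - f p with hdd
  have hf0 : f 0 = 0 := by simp [hf, h0]
  have hfd : ∀ p, f p = ∑ k ∈ Finset.range p, d k := by
    intro p
    rw [hdd, Finset.sum_range_sub (f := f), hf0, sub_zero]
  have hdmono : Monotone d := by
    apply monotone_nat_of_le_succ
    intro p
    have h := hlc (p+1) (by omega)
    simp only [Nat.add_sub_cancel] at h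
    have h2 : Real.log ((N (p+1))^2) ≤ Real.log (N p * N (p+2)) :=
      Real.log_le_log (pow_pos (hpos _) 2) h
    rw [Real.log_pow, Real.log_mul (hpos p).ne' (hpos _).ne'] at h2
    simp only [hdd, hf]
    push_cast at h2
    have e : p + 1 + 1 = p + 2 := by omega
    rw [e]
    linarith
  have hd0 : 0 ≤ d 0 := by
    have : 0 ≤ Real.log (N 1) := Real.log_nonneg (h0 ▸ h01)
    simp only [hdd]
    rw [hf0]
    simpa using this
  have hfnn : ∀ p, 0 ≤ f p := by
    intro p
    rw [hfd]
    exact Finset.sum_nonneg fun k _ => hd0.trans (hdmono (Nat.zero_le k))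
  have hsum3 : ∀ a b : ℕ, a ≤ b → (b:ℝ) * f a ≤ (a:ℝ) * f b := by
    intro a b hab
    rw [hfd a, hfd b]
    exact sum3 d hdmono hd0 hab
  have hsum2 : ∀ p q : ℕ, p ≤ q → 2 * f (p+q) ≤ f (2*p) + f (2*q) := by
    intro p q hpq
    rw [hfd (p+q), hfd (2*p), hfd (2*q)]
    exact sum2 d hdmono hpq
  -- main equivalence
  have main1 : (∃ A : ℝ, 1 ≤ A ∧ ∀ p : ℕ, 1 ≤ p →
      (N (C * p)) ^ (1 / (C : ℝ)) ≤ A ^ p * N p) ↔ HasMG N := by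
    constructor
    · rintro ⟨A, hA1, hA⟩
      have hA0 : (0:ℝ) < A := zero_lt_one.trans_le hA1
      have hlogA : 0 ≤ Real.log A := Real.log_nonneg hA1
      have hlog : ∀ p : ℕ, 1 ≤ p → f (C * p) ≤ C * p * Real.log A + C * f p := by
        intro p hp
        have h := hA p hp
        have hL : Real.log ((N (C*p)) ^ (1/(C:ℝ))) = (1/(C:ℝ)) * f (C*p) :=
          Real.log_rpow (hpos _) _
        have hR : Real.log (A^p * N p) = p * Real.log A + f p := by
          rw [Real.log_mul (pow_pos hA0 p).ne' (hpos p).ne', Real.log_pow]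
        have h3 := Real.log_le_log (Real.rpow_pos_of_pos (hpos _) _) h
        rw [hL, hR] at h3
        have h4 := mul_le_mul_of_nonneg_left h3 hC0.le
        have h5 : (C:ℝ) * ((1/(C:ℝ)) * f (C*p)) = f (C*p) := by field_simp
        rw [h5] at h4
        linarith [h4]
      have h2p : ∀ p : ℕ, 1 ≤ p → f (2*p) ≤ 2*p*Real.log A + 2 * f p := by
        intro p hp
        have hle : 2*p ≤ C*p := Nat.mul_le_mul_right p hC
        have h1 := hsum3 (2*p) (C*p) hle
        push_cast at h1
        have hp0 : (0:ℝ) < p := by exact_mod_cast hp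
        -- C * f(2p) ≤ 2 * f(Cp)
        have h2 : (C:ℝ) * f (2*p) ≤ 2 * f (C*p) := by
          have := h1
          nlinarith [this]
        have h3 := hlog p hp
        nlinarith [h2, h3]
      refine ⟨A, hA1, ?_⟩
      have key : ∀ p q : ℕ, p ≤ q → N (p + q) ≤ A ^ (p + q) * N p * N q := by
        intro p q hpq
        rcases Nat.eq_zero_or_pos p with hp0 | hp1
        · subst hp0
          simp only [zero_add, h0, mul_one]
          have : (1:ℝ) ≤ A ^ q := one_le_pow₀ hA1
          nlinarith [hpos q, this]
        · have hq1 : 1 ≤ q := le_trans hp1 hpq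
          have hflog : f (p+q) ≤ (p+q) * Real.log A + f p + f q := by
            have h1 := hsum2 p q hpq
            have h2 := h2p p hp1
            have h3 := h2p q hq1
            push_cast at h1 h2 h3 ⊢
            linarith
          rw [← Real.log_le_log_iff (hpos _) (mul_pos (mul_pos (pow_pos hA0 _) (hpos p)) (hpos q))]
          have hR : Real.log (A^(p+q) * N p * N q) = (p+q) * Real.log A + f p + f q := by
            rw [Real.log_mul (mul_pos (pow_pos hA0 _) (hpos p)).ne' (hpos q).ne',
              Real.log_mul (pow_pos hA0 _).ne' (hpos p).ne', Real.log_pow]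
            push_cast
            ring
          rw [hR]
          exact hflog
      intro p q
      rcases le_total p q with h | h
      · exact key p q h
      · have := key q p h
        rw [Nat.add_comm q p] at this
        calc N (p+q) ≤ A ^ (p+q) * N q * N p := this
          _ = A ^ (p+q) * N p * N q := by ring
    · rintro ⟨B, hB1, hB⟩
      have hB0 : (0:ℝ) < B := zero_lt_one.trans_le hB1
      have hlogB : 0 ≤ Real.log B := Real.log_nonneg hB1
      have hlogmg : ∀ p q : ℕ, f (p+q) ≤ (p+q) * Real.log B + f p + f q := by
        intro p q
        have h := hB p q
        have h3 := Real.log_le_log (hpos _) h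
        have hR : Real.log (B^(p+q) * N p * N q) = (p+q) * Real.log B + f p + f q := by
          rw [Real.log_mul (mul_pos (pow_pos hB0 _) (hpos p)).ne' (hpos q).ne',
            Real.log_mul (pow_pos hB0 _).ne' (hpos p).ne', Real.log_pow]
          push_cast
          ring
        rw [hR] at h3
        push_cast at h3 ⊢
        linarith
      have hiter : ∀ k p : ℕ, f (k*p) ≤ (k:ℝ)^2 * p * Real.log B + k * f p := by
        intro k p
        induction k with
        | zero => simp [hf0]
        | succ k ih =>
          have h1 : f ((k+1)*p) = f (k*p + p) := by ring_nf
          have h2 := hlogmg (k*p) p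
          have hplog : 0 ≤ (p:ℝ) * Real.log B := by positivity
          have hfp := hfnn p
          push_cast at h2 ih ⊢
          rw [h1]
          nlinarith [h2, ih, mul_nonneg (mul_nonneg (Nat.cast_nonneg k : (0:ℝ) ≤ k) (Nat.cast_nonneg p : (0:ℝ) ≤ p)) hlogB]
      refine ⟨B^C, one_le_pow₀ hB1, ?_⟩
      intro p hp
      have hflog : (1/(C:ℝ)) * f (C*p) ≤ p * Real.log (B^C) + f p := by
        have h1 := hiter C p
        rw [Real.log_pow]
        have h2 := mul_le_mul_of_nonneg_left h1 (by positivity : (0:ℝ) ≤ 1/(C:ℝ))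
        have h3 : (1/(C:ℝ)) * ((C:ℝ)^2 * p * Real.log B + C * f p)
            = (p:ℝ) * ((C:ℝ) * Real.log B) + f p := by field_simp
        rw [h3] at h2
        exact h2
      rw [← Real.log_le_log_iff (Real.rpow_pos_of_pos (hpos _) _) (mul_pos (pow_pos (pow_pos hB0 C) p) (hpos p))]
      rw [Real.log_rpow (hpos _), Real.log_mul (pow_pos (pow_pos hB0 C) p).ne' (hpos p).ne', Real.log_pow]
      exact hflog
  refine ⟨main1, ?_⟩
  set L : ℕ → ℝ := fun p => (N (C * p)) ^ (1 / (C : ℝ)) with hLdef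
  have hLpos : ∀ p, 0 < L p := fun p => Real.rpow_pos_of_pos (hpos _) _
  have hNL : Precsim N L := by
    refine ⟨1, fun p hp => ?_⟩
    have hple : p ≤ C * p := by
      calc p = 1 * p := (one_mul p).symm
        _ ≤ C * p := Nat.mul_le_mul_right p (by omega)
    have h3 := hsum3 p (C*p) hple
    push_cast at h3
    have hp0 : (0:ℝ) < p := by exact_mod_cast hp
    have h4 : f p ≤ (1/(C:ℝ)) * f (C*p) := by
      rw [div_mul_eq_mul_div, le_div_iff₀ hC0]
      nlinarith [h3]
    have h1 : N p ≤ L p := by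
      rw [← Real.log_le_log_iff (hpos p) (hLpos p), Real.log_rpow (hpos _)]
      exact h4
    have : N p / L p ≤ 1 := (div_le_one (hLpos p)).mpr h1
    calc (N p / L p) ^ (1 / (p:ℝ)) ≤ 1 :=
          Real.rpow_le_one (div_pos (hpos p) (hLpos p)).le this (by positivity)
      _ = 1 := rfl
  constructor
  · rintro ⟨-, hLN⟩
    obtain ⟨A, hA⟩ := hLN
    apply main1.mp
    refine ⟨max A 1, le_max_right A 1, fun p hp => ?_⟩
    have hM1 : (1:ℝ) ≤ max A 1 := le_max_right A 1
    have hM0 : (0:ℝ) < max A 1 := zero_lt_one.trans_le hM1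
    have h := (hA p hp).trans (le_max_left A 1)
    set x := L p / N p with hx
    have hx0 : 0 < x := div_pos (hLpos p) (hpos p)
    have hp0 : (p:ℝ) ≠ 0 := by positivity
    have hxeq : (x ^ (1/(p:ℝ))) ^ p = x := by
      rw [← Real.rpow_natCast (x ^ (1/(p:ℝ))) p, ← Real.rpow_mul hx0.le,
        one_div_mul_cancel hp0, Real.rpow_one]
    have hxle : x ≤ (max A 1) ^ p := by
      calc x = (x ^ (1/(p:ℝ))) ^ p := hxeq.symm
        _ ≤ (max A 1) ^ p := pow_le_pow_left₀ (by positivity) h p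
    rw [hx, div_le_iff₀ (hpos p)] at hxle
    exact hxle
  · intro hmg
    obtain ⟨A, hA1, hA⟩ := main1.mpr hmg
    refine ⟨hNL, ⟨A, fun p hp => ?_⟩⟩
    have hA0 : (0:ℝ) ≤ A := zero_le_one.trans hA1
    have h := hA p hp
    have hdiv : L p / N p ≤ A ^ p := (div_le_iff₀ (hpos p)).mpr h
    have hp0 : (p:ℝ) ≠ 0 := by positivity
    calc (L p / N p) ^ (1/(p:ℝ)) ≤ (A ^ p) ^ (1/(p:ℝ)) :=
          Real.rpow_le_rpow (div_pos (hLpos p) (hpos p)).le hdiv (by positivity)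
      _ = A := by
          rw [← Real.rpow_natCast A p, ← Real.rpow_mul hA0,
            mul_one_div_cancel hp0, Real.rpow_one]
end

section
/- Let M : ℕ → ℝ be a weight sequence in the class LC, with m_p := M_p/p!. Then the associated weight function ω_M is a normalized weight function (continuous, nondecreasing, ω_M(0) = 0, ω_M(t) → +∞ as t → +∞, and ω_M(t) = 0 for 0 ≤ t ≤ 1), it satisfies (ω3) (log(t) = o(ω_M(t)) as t → +∞) and (ω4) (t ↦ ω_M(e^t) is convex on ℝ). Moreover: if liminf_{p→∞} (m_p)^{1/p} > 0 then ω_M satisfies (ω2) (ω_M(t) = O(t) as t → +∞); if lim_{p→∞} (m_p)^{1/p} = +∞ then ω_M satisfies (ω5) (ω_M(t) = o(t) as t → +∞); and ω_M satisfies (ω6) (there exists H ≥ 1 with 2·ω_M(t) ≤ ω_M(H·t) + H for all t ≥ 0) if and only if M has moderate growth (mg). -/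
open Filter Real Asymptotics

section Aux

variable {M : ℕ → ℝ}

lemma lc_Q_mono (hM : IsLC M) : Monotone (fun j : ℕ => M (j + 1) / M j) := by
  apply monotone_nat_of_le_succ
  intro j
  rw [div_le_div_iff₀ (hM.1 j) (hM.1 (j + 1))]
  have h := hM.2.2.2.1 (j + 1) (Nat.le_add_left 1 j)
  simp only [Nat.add_sub_cancel] at h
  nlinarith [h]

lemma lc_mono (hM : IsLC M) : Monotone M := by
  apply monotone_nat_of_le_succ
  intro p
  have h1 : (1 : ℝ) ≤ M (p + 1) / M p := by
    calc (1 : ℝ) ≤ M (0 + 1) / M 0 := by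
          rw [zero_add, hM.2.1, div_one]
          calc (1:ℝ) = M 0 := hM.2.1.symm
            _ ≤ M 1 := hM.2.2.1
      _ ≤ M (p + 1) / M p := lc_Q_mono hM (Nat.zero_le p)
  calc M p = 1 * M p := (one_mul _).symm
    _ ≤ (M (p + 1) / M p) * M p := mul_le_mul_of_nonneg_right h1 (hM.1 p).le
    _ = M (p + 1) := div_mul_cancel₀ _ (hM.1 p).ne'

lemma lc_one_le (hM : IsLC M) (p : ℕ) : 1 ≤ M p :=
  calc (1:ℝ) = M 0 := hM.2.1.symm
    _ ≤ M p := lc_mono hM (Nat.zero_le p)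

lemma rpow_nat_inv_pow {x : ℝ} (hx : 0 ≤ x) {p : ℕ} (hp : p ≠ 0) :
    (x ^ (1 / (p : ℝ))) ^ p = x := by
  rw [← Real.rpow_natCast (x ^ (1 / (p : ℝ))) p, ← Real.rpow_mul hx,
    one_div, inv_mul_cancel₀ (by exact_mod_cast hp : ((p : ℝ)) ≠ 0), Real.rpow_one]

lemma pow_le_of_le_rpow {x s : ℝ} (hx : 0 ≤ x) (hs : 0 ≤ s) {p : ℕ} (hp : p ≠ 0)
    (h : s ≤ x ^ (1 / (p : ℝ))) : s ^ p ≤ x :=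
  calc s ^ p ≤ (x ^ (1 / (p : ℝ))) ^ p := pow_le_pow_left₀ hs h p
    _ = x := rpow_nat_inv_pow hx hp

lemma lc_bdd (hM : IsLC M) {t : ℝ} (ht : 0 < t) :
    BddAbove (Set.range fun p : ℕ => Real.log (t ^ p / M p)) := by
  obtain ⟨N, hN⟩ := Filter.eventually_atTop.1 (hM.2.2.2.2.eventually_ge_atTop (max t 1))
  refine ⟨max 0 ((Finset.range (N + 1)).sup' (by simp) fun p => Real.log (t ^ p / M p)), ?_⟩
  rintro y ⟨p, rfl⟩
  rcases le_or_gt p N with hp | hp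
  · exact le_max_of_le_right (Finset.le_sup' (fun p => Real.log (t ^ p / M p)) (Finset.mem_range.2 (Nat.lt_succ_of_le hp)))
  · refine le_max_of_le_left (Real.log_nonpos (div_nonneg (pow_nonneg ht.le p) (hM.1 p).le) ?_)
    rw [div_le_one (hM.1 p)]
    calc t ^ p ≤ (max t 1) ^ p := pow_le_pow_left₀ ht.le (le_max_left _ _) p
      _ ≤ M p := pow_le_of_le_rpow (hM.1 p).le (le_trans zero_le_one (le_max_right t 1))
          (by omega) (hN p hp.le)

lemma omegaM_of_pos {t : ℝ} (ht : t ≠ 0) :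
    omegaM M t = ⨆ p : ℕ, Real.log (t ^ p / M p) := if_neg ht

lemma le_omegaM (hM : IsLC M) {t : ℝ} (ht : 0 < t) (p : ℕ) :
    Real.log (t ^ p / M p) ≤ omegaM M t := by
  rw [omegaM_of_pos ht.ne']
  exact le_ciSup (lc_bdd hM ht) p

lemma omegaM_le {t : ℝ} (ht : 0 < t) {a : ℝ}
    (h : ∀ p : ℕ, Real.log (t ^ p / M p) ≤ a) : omegaM M t ≤ a := by
  rw [omegaM_of_pos ht.ne']; exact ciSup_le h

lemma omegaM_nonneg (hM : IsLC M) {t : ℝ} (ht : 0 ≤ t) : 0 ≤ omegaM M t := by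
  rcases ht.eq_or_lt with rfl | ht
  · simp [omegaM]
  · have := le_omegaM hM ht 0
    simpa [hM.2.1] using this

lemma omegaM_mono (hM : IsLC M) : MonotoneOn (omegaM M) (Set.Ici 0) := by
  intro s hs t ht hst
  rcases (Set.mem_Ici.mp hs).eq_or_lt with rfl | hs'
  · rw [show omegaM M 0 = 0 from if_pos rfl]
    exact omegaM_nonneg hM ht
  · apply omegaM_le hs'
    intro p
    calc Real.log (s ^ p / M p) ≤ Real.log (t ^ p / M p) :=
          Real.log_le_log (div_pos (pow_pos hs' p) (hM.1 p))
            ((div_le_div_iff_of_pos_right (hM.1 p)).2 (pow_le_pow_left₀ hs'.le hst p))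
      _ ≤ omegaM M t := le_omegaM hM (lt_of_lt_of_le hs' hst) p

lemma omegaM_eq_zero (hM : IsLC M) {t : ℝ} (ht0 : 0 ≤ t) (ht1 : t ≤ 1) : omegaM M t = 0 := by
  rcases ht0.eq_or_lt with rfl | ht
  · exact if_pos rfl
  · refine le_antisymm (omegaM_le ht fun p => Real.log_nonpos
      (div_nonneg (pow_nonneg ht.le p) (hM.1 p).le) ?_) ?_
    · rw [div_le_one (hM.1 p)]
      calc t ^ p ≤ 1 := pow_le_one₀ ht.le ht1
        _ ≤ M p := lc_one_le hM p
    · have := le_omegaM hM ht 0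
      simpa [hM.2.1] using this

lemma omegaM_tendsto (hM : IsLC M) : Tendsto (omegaM M) atTop atTop := by
  apply Filter.tendsto_atTop_mono' atTop ?_
    (Filter.tendsto_atTop_add_const_right atTop (-(Real.log (M 1))) Real.tendsto_log_atTop)
  filter_upwards [eventually_gt_atTop (0:ℝ)] with t ht
  have := le_omegaM hM ht 1
  rw [pow_one, Real.log_div ht.ne' (hM.1 1).ne'] at this
  linarith

end Aux

section Aux2
variable {M : ℕ → ℝ}

lemma lc_bdd' (hM : IsLC M) (x : ℝ) :
    BddAbove (Set.range fun p : ℕ => (p : ℝ) * x - Real.log (M p)) := by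
  have h := lc_bdd hM (Real.exp_pos x)
  have he : (fun p : ℕ => Real.log ((Real.exp x) ^ p / M p))
      = fun p : ℕ => (p : ℝ) * x - Real.log (M p) := by
    funext p
    rw [Real.log_div (pow_ne_zero _ (Real.exp_ne_zero x)) (hM.1 p).ne', Real.log_pow,
      Real.log_exp]
  rwa [he] at h

lemma omegaM_exp (hM : IsLC M) (x : ℝ) :
    omegaM M (Real.exp x) = ⨆ p : ℕ, ((p : ℝ) * x - Real.log (M p)) := by
  rw [omegaM_of_pos (Real.exp_ne_zero x)]
  congr 1
  funext p
  rw [Real.log_div (pow_ne_zero _ (Real.exp_ne_zero x)) (hM.1 p).ne', Real.log_pow,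
    Real.log_exp]

lemma omegaM_exp_convexOn (hM : IsLC M) :
    ConvexOn ℝ Set.univ (fun x : ℝ => omegaM M (Real.exp x)) := by
  refine ⟨convex_univ, fun x _ y _ a b ha hb hab => ?_⟩
  simp only [omegaM_exp hM, smul_eq_mul]
  apply ciSup_le
  intro p
  have h1 : (p : ℝ) * x - Real.log (M p) ≤ ⨆ q : ℕ, ((q : ℝ) * x - Real.log (M q)) :=
    le_ciSup (lc_bdd' hM x) p
  have h2 : (p : ℝ) * y - Real.log (M p) ≤ ⨆ q : ℕ, ((q : ℝ) * y - Real.log (M q)) :=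
    le_ciSup (lc_bdd' hM y) p
  have key : (p : ℝ) * (a * x + b * y) - Real.log (M p)
      = a * ((p : ℝ) * x - Real.log (M p)) + b * ((p : ℝ) * y - Real.log (M p)) := by
    linear_combination (Real.log (M p)) * hab
  rw [key]
  exact add_le_add (mul_le_mul_of_nonneg_left h1 ha) (mul_le_mul_of_nonneg_left h2 hb)

lemma omegaM_continuousOn (hM : IsLC M) : ContinuousOn (omegaM M) (Set.Ici 0) := by
  have hcont : Continuous (fun x : ℝ => omegaM M (Real.exp x)) :=
    (omegaM_exp_convexOn hM).locallyLipschitz.continuous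
  intro t ht
  rcases (Set.mem_Ici.mp ht).eq_or_lt with rfl | ht'
  · have h1 : ∀ᶠ s in nhdsWithin (0:ℝ) (Set.Ici 0), omegaM M s = 0 := by
      filter_upwards [eventually_mem_nhdsWithin,
        mem_nhdsWithin_of_mem_nhds (Iio_mem_nhds one_pos)] with s hs hs1
      exact omegaM_eq_zero hM hs (le_of_lt hs1)
    have h0 : omegaM M 0 = 0 := if_pos rfl
    unfold ContinuousWithinAt
    rw [h0]
    exact Filter.Tendsto.congr' (h1.mono fun s hs => hs.symm) tendsto_const_nhds
  · have hca : ContinuousAt (omegaM M) t := by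
      have h1 : ContinuousAt (fun s : ℝ => omegaM M (Real.exp (Real.log s))) t :=
        hcont.continuousAt.comp (Real.continuousAt_log ht'.ne')
      apply h1.congr
      filter_upwards [isOpen_Ioi.mem_nhds ht'] with s hs
      rw [Real.exp_log hs]
    exact hca.continuousWithinAt

lemma omegaM_log_littleO (hM : IsLC M) :
    (fun t : ℝ => Real.log t) =o[atTop] omegaM M := by
  rw [isLittleO_iff]
  intro c hc
  obtain ⟨n, hn⟩ := exists_nat_ge (2 / c)
  set p := n + 1 with hp
  have hp2 : 2 ≤ c * p := by
    have : 2 / c ≤ (p : ℝ) := by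
      rw [hp]; push_cast; linarith
    calc (2:ℝ) = c * (2 / c) := by field_simp
      _ ≤ c * p := mul_le_mul_of_nonneg_left this hc.le
  have hp0 : (0:ℝ) < p := by positivity
  filter_upwards [(omegaM_tendsto hM).eventually_ge_atTop (Real.log (M p)),
    eventually_ge_atTop (1:ℝ)] with t hMt ht1
  have ht : (0:ℝ) < t := lt_of_lt_of_le one_pos ht1
  have hlt : 0 ≤ Real.log t := Real.log_nonneg ht1
  have hwt : 0 ≤ omegaM M t := le_trans (Real.log_nonneg (lc_one_le hM p)) hMt
  rw [Real.norm_eq_abs, Real.norm_eq_abs, abs_of_nonneg hlt, abs_of_nonneg hwt]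
  have key : (p : ℝ) * Real.log t - Real.log (M p) ≤ omegaM M t := by
    have h := le_omegaM hM ht p
    rwa [Real.log_div (pow_ne_zero _ ht.ne') (hM.1 p).ne', Real.log_pow] at h
  have h2 : (p : ℝ) * Real.log t ≤ 2 * omegaM M t := by linarith
  have h3 : 2 * omegaM M t ≤ (c * p) * omegaM M t := mul_le_mul_of_nonneg_right hp2 hwt
  have h4 : (p:ℝ) * Real.log t ≤ (p:ℝ) * (c * omegaM M t) := by
    calc (p:ℝ) * Real.log t ≤ (c * p) * omegaM M t := le_trans h2 h3
      _ = (p:ℝ) * (c * omegaM M t) := by ring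
  exact le_of_mul_le_mul_left h4 hp0

end Aux2

section Aux3
variable {M : ℕ → ℝ}

lemma omegaM_growth (hM : IsLC M) {c : ℝ} (hc : 0 < c) {N : ℕ}
    (h : ∀ q, N ≤ q → c ^ q * (Nat.factorial q : ℝ) ≤ M q) :
    ∀ t : ℝ, 1 ≤ t → omegaM M t ≤ t / c + N * Real.log t := by
  intro t ht1
  have ht : (0:ℝ) < t := lt_of_lt_of_le one_pos ht1
  have hlt : 0 ≤ Real.log t := Real.log_nonneg ht1
  apply omegaM_le ht
  intro q
  rcases le_or_gt N q with hq | hq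
  · have hfac : (0:ℝ) < c ^ q * (Nat.factorial q : ℝ) := by positivity
    have key : t ^ q / M q ≤ Real.exp (t / c) := by
      have h2 : t ^ q / M q ≤ t ^ q / (c ^ q * (Nat.factorial q : ℝ)) :=
        div_le_div_of_nonneg_left (pow_nonneg ht.le q) hfac (h q hq)
      have h3 : t ^ q / (c ^ q * (Nat.factorial q : ℝ)) = (t / c) ^ q / (Nat.factorial q : ℝ) := by
        rw [div_pow]; ring
      have h4 : (t / c) ^ q / (Nat.factorial q : ℝ) ≤ Real.exp (t / c) := by
        calc (t / c) ^ q / (Nat.factorial q : ℝ)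
            ≤ ∑ i ∈ Finset.range (q + 1), (t / c) ^ i / (Nat.factorial i : ℝ) := by
              apply Finset.single_le_sum (f := fun i => (t / c) ^ i / (Nat.factorial i : ℝ))
                (fun i _ => by positivity) (Finset.self_mem_range_succ q)
          _ ≤ Real.exp (t / c) := Real.sum_le_exp_of_nonneg (by positivity) _
      calc t ^ q / M q ≤ t ^ q / (c ^ q * (Nat.factorial q : ℝ)) := h2
        _ = (t / c) ^ q / (Nat.factorial q : ℝ) := h3
        _ ≤ Real.exp (t / c) := h4
    calc Real.log (t ^ q / M q) ≤ Real.log (Real.exp (t / c)) :=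
          Real.log_le_log (div_pos (pow_pos ht q) (hM.1 q)) key
      _ = t / c := Real.log_exp _
      _ ≤ t / c + N * Real.log t := le_add_of_nonneg_right (by positivity)
  · have h1 : Real.log (t ^ q / M q) ≤ (q : ℝ) * Real.log t := by
      rw [Real.log_div (pow_ne_zero _ ht.ne') (hM.1 q).ne', Real.log_pow]
      have := Real.log_nonneg (lc_one_le hM q)
      linarith
    have h2 : (q : ℝ) * Real.log t ≤ (N : ℝ) * Real.log t :=
      mul_le_mul_of_nonneg_right (by exact_mod_cast hq.le) hlt
    have h3 : 0 ≤ t / c := by positivity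
    linarith

lemma mseq_root_bound (hM : IsLC M) {c : ℝ} (hc : 0 < c) {N : ℕ}
    (h : ∀ q, N ≤ q → c ≤ (mseq M q) ^ (1 / (q : ℝ))) :
    ∀ q, max N 1 ≤ q → c ^ q * (Nat.factorial q : ℝ) ≤ M q := by
  intro q hq
  have hq1 : q ≠ 0 := by omega
  have hqN : N ≤ q := le_trans (le_max_left _ _) hq
  have hm : 0 ≤ mseq M q := div_nonneg (hM.1 q).le (Nat.cast_nonneg _)
  have h1 := pow_le_of_le_rpow hm hc.le hq1 (h q hqN)
  have hfac : (0:ℝ) < (Nat.factorial q : ℝ) := by positivity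
  simp only [mseq] at h1
  rw [le_div_iff₀ hfac] at h1
  exact h1

lemma omegaM_bigO (hM : IsLC M)
    (h : 0 < Filter.liminf (fun p : ℕ => (mseq M p) ^ (1 / (p : ℝ))) Filter.atTop) :
    omegaM M =O[atTop] fun t : ℝ => t := by
  set L := Filter.liminf (fun p : ℕ => (mseq M p) ^ (1 / (p : ℝ))) Filter.atTop with hL
  have hbdd : IsBoundedUnder (· ≥ ·) atTop (fun p : ℕ => (mseq M p) ^ (1 / (p : ℝ))) :=
    Filter.isBoundedUnder_of ⟨0, fun p =>
      Real.rpow_nonneg (div_nonneg (hM.1 p).le (Nat.cast_nonneg _)) _⟩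
  have hev := Filter.eventually_lt_of_lt_liminf (half_lt_self h) hbdd
  obtain ⟨N, hN⟩ := Filter.eventually_atTop.1 hev
  have hc : (0:ℝ) < L / 2 := half_pos h
  have hbound := omegaM_growth hM hc (mseq_root_bound hM hc (fun q hq => (hN q hq).le))
  rw [isBigO_iff]
  refine ⟨2 / L + (max N 1 : ℕ), ?_⟩
  filter_upwards [eventually_ge_atTop (1:ℝ)] with t ht1
  have ht : (0:ℝ) < t := lt_of_lt_of_le one_pos ht1
  have h1 := hbound t ht1
  have h2 : Real.log t ≤ t := (Real.log_le_sub_one_of_pos ht).trans (by linarith)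
  have h3 : 0 ≤ omegaM M t := omegaM_nonneg hM ht.le
  rw [Real.norm_eq_abs, Real.norm_eq_abs, abs_of_nonneg h3, abs_of_pos ht]
  have h4 : t / (L / 2) = (2 / L) * t := by
    field_simp
  have h5 : ((max N 1 : ℕ) : ℝ) * Real.log t ≤ ((max N 1 : ℕ) : ℝ) * t :=
    mul_le_mul_of_nonneg_left h2 (Nat.cast_nonneg _)
  calc omegaM M t ≤ t / (L / 2) + ((max N 1 : ℕ) : ℝ) * Real.log t := h1
    _ ≤ (2 / L) * t + ((max N 1 : ℕ) : ℝ) * t := by rw [h4] at *; linarith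
    _ = (2 / L + (max N 1 : ℕ)) * t := by ring

lemma omegaM_littleO (hM : IsLC M)
    (h : Tendsto (fun p : ℕ => (mseq M p) ^ (1 / (p : ℝ))) atTop atTop) :
    omegaM M =o[atTop] fun t : ℝ => t := by
  rw [isLittleO_iff]
  intro eps heps
  have hc : (0:ℝ) < 2 / eps := by positivity
  obtain ⟨N, hN⟩ := Filter.eventually_atTop.1 (h.eventually_ge_atTop (2 / eps))
  have hbound := omegaM_growth hM hc (mseq_root_bound hM hc hN)
  have hN0 : (0:ℝ) < ((max N 1 : ℕ) : ℝ) := by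
    have : 1 ≤ max N 1 := le_max_right _ _
    exact_mod_cast lt_of_lt_of_le one_pos (by exact_mod_cast this)
  have hlog := Real.isLittleO_log_id_atTop.def
    (show (0:ℝ) < eps / (2 * ((max N 1 : ℕ) : ℝ)) by positivity)
  filter_upwards [eventually_ge_atTop (1:ℝ), hlog] with t ht1 hlogt
  have ht : (0:ℝ) < t := lt_of_lt_of_le one_pos ht1
  have hlt : 0 ≤ Real.log t := Real.log_nonneg ht1
  have h3 : 0 ≤ omegaM M t := omegaM_nonneg hM ht.le
  rw [Real.norm_eq_abs, Real.norm_eq_abs, abs_of_nonneg h3, abs_of_pos ht]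
  rw [Real.norm_eq_abs, Real.norm_eq_abs, abs_of_nonneg hlt, id_eq, abs_of_pos ht] at hlogt
  have h1 := hbound t ht1
  have h4 : t / (2 / eps) = (eps / 2) * t := by field_simp
  have h5 : ((max N 1 : ℕ) : ℝ) * Real.log t ≤ (eps / 2) * t := by
    have := mul_le_mul_of_nonneg_left hlogt hN0.le
    calc ((max N 1 : ℕ) : ℝ) * Real.log t
        ≤ ((max N 1 : ℕ) : ℝ) * (eps / (2 * ((max N 1 : ℕ) : ℝ)) * t) := this
      _ = (eps / 2) * t := by field_simp
  calc omegaM M t ≤ t / (2 / eps) + ((max N 1 : ℕ) : ℝ) * Real.log t := h1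
    _ ≤ (eps / 2) * t + (eps / 2) * t := by rw [h4]; linarith
    _ = eps * t := by ring

end Aux3

section Aux4
variable {M : ℕ → ℝ}

lemma omegaM_attained (hM : IsLC M) (n : ℕ) :
    ∃ t : ℝ, 0 < t ∧ omegaM M t ≤ Real.log (t ^ n / M n) := by
  set t := M (n + 1) / M n with htdef
  have ht : 0 < t := div_pos (hM.1 _) (hM.1 _)
  have hup : ∀ q, n ≤ q → t ^ q * M n ≤ t ^ n * M q := by
    intro q hq
    induction q, hq using Nat.le_induction with
    | base => exact le_rfl
    | succ q hq ih =>
      have hQ : t ≤ M (q + 1) / M q := lc_Q_mono hM hq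
      have h1 : t * M q ≤ M (q + 1) := (le_div_iff₀ (hM.1 q)).1 hQ
      calc t ^ (q + 1) * M n = t * (t ^ q * M n) := by ring
        _ ≤ t * (t ^ n * M q) := mul_le_mul_of_nonneg_left ih ht.le
        _ = t ^ n * (t * M q) := by ring
        _ ≤ t ^ n * M (q + 1) := mul_le_mul_of_nonneg_left h1 (pow_nonneg ht.le n)
  have hdown : ∀ d q, q + d = n → t ^ q * M n ≤ t ^ n * M q := by
    intro d
    induction d with
    | zero =>
      intro q hd
      have hq : q = n := by omega
      subst hq; exact le_rfl
    | succ d ih =>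
      intro q hd
      have h1 := ih (q + 1) (by omega)
      have hQ : M (q + 1) / M q ≤ t := lc_Q_mono hM (by omega : q ≤ n)
      have h2 : M (q + 1) ≤ t * M q := (div_le_iff₀ (hM.1 q)).1 hQ
      have h3 : t * (t ^ q * M n) ≤ t * (t ^ n * M q) := by
        calc t * (t ^ q * M n) = t ^ (q + 1) * M n := by ring
          _ ≤ t ^ n * M (q + 1) := h1
          _ ≤ t ^ n * (t * M q) := mul_le_mul_of_nonneg_left h2 (pow_nonneg ht.le n)
          _ = t * (t ^ n * M q) := by ring
      exact le_of_mul_le_mul_left h3 ht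
  refine ⟨t, ht, omegaM_le ht fun q => ?_⟩
  have key : t ^ q * M n ≤ t ^ n * M q := by
    rcases le_total n q with h | h
    · exact hup q h
    · exact hdown (n - q) q (by omega)
  apply Real.log_le_log (div_pos (pow_pos ht q) (hM.1 q))
  rw [div_le_div_iff₀ (hM.1 q) (hM.1 n)]
  exact key

lemma omega6_iff_mg (hM : IsLC M) :
    (∃ H : ℝ, 1 ≤ H ∧ ∀ t : ℝ, 0 ≤ t → 2 * omegaM M t ≤ omegaM M (H * t) + H) ↔ HasMG M := by
  constructor
  · rintro ⟨H, hH1, h6⟩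
    have hH0 : (0:ℝ) < H := lt_of_lt_of_le one_pos hH1
    have hexp1 : (1:ℝ) ≤ Real.exp H := Real.one_le_exp (by linarith)
    refine ⟨Real.exp H * H, by nlinarith, ?_⟩
    intro p q
    rcases Nat.eq_zero_or_pos (p + q) with h0 | hpq
    · have hp : p = 0 := by omega
      have hq : q = 0 := by omega
      subst hp; subst hq
      norm_num [hM.2.1]
    · obtain ⟨t, ht, hatt⟩ := omegaM_attained hM (p + q)
      set s := t / H with hs
      have hs0 : 0 < s := div_pos ht hH0
      have hHs : H * s = t := by rw [hs]; field_simp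
      have h6s := h6 s hs0.le
      rw [hHs] at h6s
      have l1 : (p : ℝ) * Real.log s - Real.log (M p) ≤ omegaM M s := by
        have h := le_omegaM hM hs0 p
        rwa [Real.log_div (pow_ne_zero _ hs0.ne') (hM.1 p).ne', Real.log_pow] at h
      have l2 : (q : ℝ) * Real.log s - Real.log (M q) ≤ omegaM M s := by
        have h := le_omegaM hM hs0 q
        rwa [Real.log_div (pow_ne_zero _ hs0.ne') (hM.1 q).ne', Real.log_pow] at h
      have l3 : omegaM M t ≤ ((p + q : ℕ) : ℝ) * Real.log t - Real.log (M (p + q)) := by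
        rwa [Real.log_div (pow_ne_zero _ ht.ne') (hM.1 _).ne', Real.log_pow] at hatt
      have hlogt : Real.log t = Real.log H + Real.log s := by
        rw [← hHs, Real.log_mul hH0.ne' hs0.ne']
      have main : Real.log (M (p + q))
          ≤ ((p : ℝ) + (q : ℝ)) * Real.log H + H + Real.log (M p) + Real.log (M q) := by
        rw [hlogt] at l3
        push_cast at l3
        nlinarith [l1, l2, l3, h6s]
      have step1 : M (p + q) ≤ H ^ (p + q) * Real.exp H * (M p * M q) := by
        have hrhs : (0:ℝ) < H ^ (p + q) * Real.exp H * (M p * M q) :=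
          mul_pos (mul_pos (pow_pos hH0 _) (Real.exp_pos H)) (mul_pos (hM.1 p) (hM.1 q))
        rw [← Real.log_le_log_iff (hM.1 _) hrhs]
        rw [Real.log_mul (mul_pos (pow_pos hH0 _) (Real.exp_pos H)).ne'
            (mul_pos (hM.1 p) (hM.1 q)).ne',
          Real.log_mul (pow_ne_zero _ hH0.ne') (Real.exp_ne_zero H), Real.log_pow, Real.log_exp,
          Real.log_mul (hM.1 p).ne' (hM.1 q).ne']
        push_cast
        linarith [main]
      calc M (p + q) ≤ H ^ (p + q) * Real.exp H * (M p * M q) := step1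
        _ = Real.exp H * (H ^ (p + q) * (M p * M q)) := by ring
        _ ≤ (Real.exp H) ^ (p + q) * (H ^ (p + q) * (M p * M q)) := by
            apply mul_le_mul_of_nonneg_right (le_self_pow₀ hexp1 (by omega))
            exact mul_nonneg (pow_nonneg hH0.le _) (mul_pos (hM.1 p) (hM.1 q)).le
        _ = (Real.exp H * H) ^ (p + q) * M p * M q := by rw [mul_pow]; ring
  · rintro ⟨C, hC1, hmg⟩
    refine ⟨max C 1, le_max_right _ _, ?_⟩
    intro t ht
    set H := max C 1 with hHdef
    have hH1 : (1:ℝ) ≤ H := le_max_right _ _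
    have hH0 : (0:ℝ) < H := lt_of_lt_of_le one_pos hH1
    rcases ht.eq_or_lt with rfl | ht0
    · rw [mul_zero, show omegaM M 0 = 0 from if_pos rfl]
      linarith
    · have hHt : 0 < H * t := mul_pos hH0 ht0
      have key : omegaM M t ≤ omegaM M (H * t) / 2 := by
        apply omegaM_le ht0
        intro p
        rw [le_div_iff₀ (by norm_num : (0:ℝ) < 2)]
        have h2p := le_omegaM hM hHt (2 * p)
        have e1 : Real.log (t ^ p / M p) * 2 = Real.log ((t ^ p / M p) ^ 2) := by
          rw [Real.log_pow]; push_cast; ring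
        rw [e1]
        refine le_trans (Real.log_le_log (pow_pos (div_pos (pow_pos ht0 p) (hM.1 p)) 2) ?_) h2p
        have hMmg : M (2 * p) ≤ H ^ (2 * p) * (M p * M p) := by
          have hmm := hmg p p
          have hCH : C ^ (p + p) ≤ H ^ (p + p) :=
            pow_le_pow_left₀ (by linarith) (le_max_left _ _) _
          calc M (2 * p) = M (p + p) := by rw [two_mul]
            _ ≤ C ^ (p + p) * M p * M p := hmm
            _ ≤ H ^ (p + p) * M p * M p := by
                apply mul_le_mul_of_nonneg_right
                  (mul_le_mul_of_nonneg_right hCH (hM.1 p).le) (hM.1 p).le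
            _ = H ^ (2 * p) * (M p * M p) := by rw [two_mul]; ring
        rw [div_pow, div_le_div_iff₀ (pow_pos (hM.1 p) 2) (hM.1 (2 * p))]
        calc (t ^ p) ^ 2 * M (2 * p) ≤ (t ^ p) ^ 2 * (H ^ (2 * p) * (M p * M p)) :=
              mul_le_mul_of_nonneg_left hMmg (by positivity)
          _ = (H * t) ^ (2 * p) * M p ^ 2 := by
              rw [mul_pow, ← pow_mul]; ring
      linarith [key]

end Aux4

/-- Lemma 2.3: basic properties of the associated weight function `ω_M`. -/
theorem stmt3 (M : ℕ → ℝ) (hM : IsLC M) :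
    ContinuousOn (omegaM M) (Set.Ici (0 : ℝ)) ∧
    MonotoneOn (omegaM M) (Set.Ici (0 : ℝ)) ∧
    omegaM M 0 = 0 ∧
    Filter.Tendsto (omegaM M) Filter.atTop Filter.atTop ∧
    (∀ t : ℝ, 0 ≤ t → t ≤ 1 → omegaM M t = 0) ∧
    ((fun t : ℝ => Real.log t) =o[Filter.atTop] omegaM M) ∧
    ConvexOn ℝ Set.univ (fun x : ℝ => omegaM M (Real.exp x)) ∧
    ((0 < Filter.liminf (fun p : ℕ => (mseq M p) ^ (1 / (p : ℝ))) Filter.atTop) →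
      omegaM M =O[Filter.atTop] (fun t : ℝ => t)) ∧
    (Filter.Tendsto (fun p : ℕ => (mseq M p) ^ (1 / (p : ℝ))) Filter.atTop Filter.atTop →
      omegaM M =o[Filter.atTop] (fun t : ℝ => t)) ∧
    ((∃ H : ℝ, 1 ≤ H ∧ ∀ t : ℝ, 0 ≤ t →
        2 * omegaM M t ≤ omegaM M (H * t) + H) ↔ HasMG M) := by
  exact ⟨omegaM_continuousOn hM, omegaM_mono hM, if_pos rfl, omegaM_tendsto hM,
    fun t ht0 ht1 => omegaM_eq_zero hM ht0 ht1, omegaM_log_littleO hM,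
    omegaM_exp_convexOn hM, omegaM_bigO hM, omegaM_littleO hM, omega6_iff_mg hM⟩
end

section
/- Let M : ℕ → ℝ be a weight sequence in the class LC. Then for every p ∈ ℕ one has exp( sup_{y ≥ 0} ( p·y − ω_M(e^y) ) ) = M_p; that is, the first sequence M^{(1)} of the weight matrix associated with ω_M coincides with M. -/
open Filter Real Asymptotics

/-- Equation (2.9): `M^{(1)}_p = exp(φ*_{ω_M}(p)) = M_p`. -/
theorem stmt4 (M : ℕ → ℝ) (hM : IsLC M) (p : ℕ) :
    Real.exp (sSup ((fun y : ℝ => (p : ℝ) * y - omegaM M (Real.exp y)) ''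
      Set.Ici (0 : ℝ))) = M p := by
  obtain ⟨hpos, h0, h01, hconv, htend⟩ := hM
  set L : ℕ → ℝ := fun q => Real.log (M q) with hLdef
  have hLconv : ∀ q : ℕ, L (q+1) - L q ≤ L (q+2) - L (q+1) := by
    intro q
    have h := hconv (q+1) (by omega)
    simp only [Nat.add_sub_cancel] at h
    have h2 : Real.log ((M (q+1))^2) ≤ Real.log (M q * M (q+2)) :=
      Real.log_le_log (pow_pos (hpos _) 2) h
    rw [Real.log_pow, Real.log_mul (hpos q).ne' (hpos (q+2)).ne'] at h2
    simp only [hLdef]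
    push_cast at h2
    linarith
  have hlmono : Monotone (fun q => L (q+1) - L q) := monotone_nat_of_le_succ hLconv
  have hl0 : 0 ≤ L 1 - L 0 := by
    have : Real.log (M 0) ≤ Real.log (M 1) := Real.log_le_log (hpos 0) (h0 ▸ h01)
    simp only [hLdef]; linarith
  set y₀ : ℝ := L (p+1) - L p with hy₀
  have hy₀nn : 0 ≤ y₀ := hl0.trans (hlmono (Nat.zero_le p))
  set g : ℕ → ℝ := fun q => (q : ℝ) * y₀ - L q with hgdef
  have hstep_up : ∀ q, p ≤ q → g (q+1) ≤ g q := by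
    intro q hq
    have h1 : y₀ ≤ L (q+1) - L q := hlmono hq
    simp only [hgdef]; push_cast; linarith
  have hstep_dn : ∀ q, q < p → g q ≤ g (q+1) := by
    intro q hq
    have h1 : L (q+1) - L q ≤ y₀ := hlmono (by omega : q ≤ p)
    simp only [hgdef]; push_cast; linarith
  have hgup : ∀ n, g (p + n) ≤ g p := by
    intro n
    induction n with
    | zero => simp
    | succ n ih => exact (hstep_up (p+n) (Nat.le_add_right p n)).trans ih
  have hgdn : ∀ n q, q + n = p → g q ≤ g p := by
    intro n
    induction n with
    | zero => intro q hq; rw [Nat.add_zero] at hq; rw [hq]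
    | succ n ih =>
      intro q hq
      have h1 : q < p := by omega
      exact (hstep_dn q h1).trans (ih (q+1) (by omega))
  have hgall : ∀ q, g q ≤ g p := by
    intro q
    rcases le_or_gt q p with h | h
    · exact hgdn (p - q) q (by omega)
    · have : q = p + (q - p) := by omega
      rw [this]; exact hgup (q - p)
  have homega : ∀ y : ℝ, omegaM M (Real.exp y) = ⨆ q : ℕ, ((q : ℝ) * y - L q) := by
    intro y
    rw [omegaM, if_neg (Real.exp_ne_zero y)]
    congr 1
    funext q
    rw [Real.log_div (pow_ne_zero _ (Real.exp_ne_zero y)) (hpos q).ne',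
      Real.log_pow, Real.log_exp]
  have hbdd : ∀ y : ℝ, BddAbove (Set.range fun q : ℕ => (q : ℝ) * y - L q) := by
    intro y
    have hev := htend.eventually_ge_atTop (Real.exp (y + 1))
    rw [Filter.eventually_atTop] at hev
    obtain ⟨N, hN⟩ := hev
    refine BddAbove.mono ?_
      ((((Set.finite_Iio (max N 1)).image (fun q : ℕ => (q : ℝ) * y - L q)).bddAbove).union
        (bddAbove_Iic : BddAbove (Set.Iic (0:ℝ))))
    rintro z ⟨q, rfl⟩
    by_cases hq : q < max N 1
    · exact Or.inl ⟨q, hq, rfl⟩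
    · push_neg at hq
      right
      have hq1 : (1 : ℕ) ≤ q := le_trans (le_max_right N 1) hq
      have h1 : Real.exp (y + 1) ≤ (M q) ^ (1 / (q : ℝ)) :=
        hN q (le_trans (le_max_left N 1) hq)
      have h2 : y + 1 ≤ (1 / (q : ℝ)) * Real.log (M q) := by
        have h3 := Real.log_le_log (Real.exp_pos _) h1
        rwa [Real.log_exp, Real.log_rpow (hpos q)] at h3
      have hqpos : (0 : ℝ) < (q : ℝ) := by exact_mod_cast hq1
      have h4 : (q : ℝ) * (y + 1) ≤ Real.log (M q) := by
        have h5 := mul_le_mul_of_nonneg_left h2 hqpos.le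
        rw [← mul_assoc, mul_one_div, div_self hqpos.ne', one_mul] at h5
        exact h5
      simp only [Set.mem_Iic, hLdef]
      nlinarith
  have hω0 : omegaM M (Real.exp y₀) = (p : ℝ) * y₀ - L p := by
    rw [homega y₀]
    refine le_antisymm (ciSup_le hgall) (le_ciSup (hbdd y₀) p)
  have hgreat : IsGreatest ((fun y : ℝ => (p : ℝ) * y - omegaM M (Real.exp y)) ''
      Set.Ici (0 : ℝ)) (L p) := by
    constructor
    · refine ⟨y₀, hy₀nn, ?_⟩
      show (p : ℝ) * y₀ - omegaM M (Real.exp y₀) = L p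
      rw [hω0]; ring
    · rintro z ⟨y, hy, rfl⟩
      have h1 : (p : ℝ) * y - L p ≤ ⨆ q : ℕ, ((q : ℝ) * y - L q) := le_ciSup (hbdd y) p
      show (p : ℝ) * y - omegaM M (Real.exp y) ≤ L p
      rw [homega y]
      linarith
  rw [hgreat.csSup_eq, hLdef]
  exact Real.exp_log (hpos p)
end

section
/- Let M, N : ℕ → ℝ be weight sequences in the class LC with M ≈ N. If the associated weight function ω_M satisfies (ω1), then ω_N also satisfies (ω1). -/
open Filter Real Asymptotics

lemma omega_bdd (M : ℕ → ℝ) (hM : IsLC M) {t : ℝ} (ht : 0 < t) :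
    BddAbove (Set.range fun p : ℕ => Real.log (t ^ p / M p)) := by
  obtain ⟨P, hP⟩ := (hM.2.2.2.2.eventually_ge_atTop t).exists_forall_of_atTop
  set B := (Finset.range (P + 1)).sup' (by simp) (fun p => Real.log (t ^ p / M p)) with hB
  refine ⟨max B 0, ?_⟩
  rintro y ⟨p, rfl⟩
  rcases le_or_gt p P with hp | hp
  · have hmem : p ∈ Finset.range (P + 1) := Finset.mem_range.mpr (by omega)
    refine le_max_of_le_left ?_
    rw [hB]
    exact Finset.le_sup' (fun p => Real.log (t ^ p / M p)) hmem
  · have hp1 : p ≠ 0 := by omega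
    have h1 : t ≤ (M p) ^ (1 / (p : ℝ)) := hP p (by omega)
    have h2 : t ^ p ≤ M p := by
      calc t ^ p ≤ ((M p) ^ (1 / (p : ℝ))) ^ p := pow_le_pow_left₀ ht.le h1 p
        _ = M p := by rw [one_div, Real.rpow_inv_natCast_pow (hM.1 p).le hp1]
    have hMp := hM.1 p
    refine le_max_of_le_right (Real.log_nonpos (by positivity) ?_)
    rw [div_le_one (hM.1 p)]; exact h2

lemma omega_nonneg (M : ℕ → ℝ) (hM : IsLC M) {t : ℝ} (ht : 0 ≤ t) :
    0 ≤ omegaM M t := by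
  rcases eq_or_lt_of_le ht with h0 | h0
  · simp [omegaM, ← h0]
  · rw [omegaM, if_neg h0.ne']
    have : Real.log (t ^ 0 / M 0) = 0 := by simp [hM.2.1]
    calc (0:ℝ) = Real.log (t ^ 0 / M 0) := this.symm
      _ ≤ _ := le_ciSup (omega_bdd M hM h0) 0

lemma omega_mono (M : ℕ → ℝ) (hM : IsLC M) {s t : ℝ} (hs : 0 ≤ s) (hst : s ≤ t) :
    omegaM M s ≤ omegaM M t := by
  rcases eq_or_lt_of_le hs with h0 | h0
  · rw [omegaM, if_pos h0.symm]; exact omega_nonneg M hM (h0.le.trans hst)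
  · have ht : 0 < t := h0.trans_le hst
    rw [omegaM, if_neg h0.ne', omegaM, if_neg ht.ne']
    refine ciSup_mono (omega_bdd M hM ht) fun p => ?_
    have hMp := hM.1 p
    have h1 : (0:ℝ) < s ^ p / M p := by positivity
    refine Real.log_le_log h1 ?_
    gcongr

/-- If `M p ≤ A^p * N p` for `p ≥ 1` (and `A ≥ 1`), then `ω_N(t) ≤ ω_M(A t)`. -/
lemma omega_compare (M N : ℕ → ℝ) (hM : IsLC M) (hN : IsLC N) {A : ℝ} (hA1 : 1 ≤ A)
    (hA : ∀ p : ℕ, 1 ≤ p → M p ≤ A ^ p * N p) {t : ℝ} (ht : 0 ≤ t) :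
    omegaM N t ≤ omegaM M (A * t) := by
  rcases eq_or_lt_of_le ht with h0 | h0
  · rw [omegaM, if_pos h0.symm, ← h0, mul_zero]
    exact omega_nonneg M hM le_rfl
  · have hAt : 0 < A * t := by positivity
    rw [omegaM, if_neg h0.ne', omegaM, if_neg hAt.ne']
    refine ciSup_mono (omega_bdd M hM hAt) fun p => ?_
    rcases Nat.eq_zero_or_pos p with hp | hp
    · subst hp; simp [hM.2.1, hN.2.1]
    · have hNp := hN.1 p
      have h1 : (0:ℝ) < t ^ p / N p := by positivity
      refine Real.log_le_log h1 ?_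
      rw [div_le_div_iff₀ (hN.1 p) (hM.1 p), mul_pow, mul_comm (A ^ p) (t ^ p), mul_assoc]
      have := hA p hp
      nlinarith [pow_pos h0 p, pow_pos (lt_of_lt_of_le one_pos hA1) p, hN.1 p, hM.1 p]

/-- Extract `M p ≤ A^p * N p` from `Precsim M N` with `A = max A₀ 1`. -/
lemma precsim_pow (M N : ℕ → ℝ) (hM : IsLC M) (hN : IsLC N) (h : Precsim M N) :
    ∃ A : ℝ, 1 ≤ A ∧ ∀ p : ℕ, 1 ≤ p → M p ≤ A ^ p * N p := by
  obtain ⟨A₀, hA₀⟩ := h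
  refine ⟨max A₀ 1, le_max_right _ _, fun p hp => ?_⟩
  have hp0 : p ≠ 0 := by omega
  have hx : (0:ℝ) < M p / N p := div_pos (hM.1 p) (hN.1 p)
  have h1 : (M p / N p) ^ (1 / (p : ℝ)) ≤ max A₀ 1 :=
    (hA₀ p hp).trans (le_max_left _ _)
  have h2 : M p / N p ≤ (max A₀ 1) ^ p := by
    calc M p / N p = ((M p / N p) ^ (1 / (p : ℝ))) ^ p := by
          rw [one_div, Real.rpow_inv_natCast_pow hx.le hp0]
      _ ≤ (max A₀ 1) ^ p := pow_le_pow_left₀ (Real.rpow_nonneg hx.le _) h1 p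
  rwa [div_le_iff₀ (hN.1 p)] at h2

/-- Iterated `(ω1)`. -/
lemma omega1_iter (M : ℕ → ℝ) (hM : IsLC M) (h : Omega1 (omegaM M)) (k : ℕ) :
    ∃ L : ℝ, 1 ≤ L ∧ ∀ t : ℝ, 0 ≤ t → omegaM M ((2:ℝ) ^ k * t) ≤ L * (omegaM M t + 1) := by
  induction k with
  | zero =>
    refine ⟨1, le_rfl, fun t ht => ?_⟩
    simp only [pow_zero, one_mul]
    linarith [omega_nonneg M hM ht]
  | succ k ih =>
    obtain ⟨Lk, hLk1, hLk⟩ := ih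
    obtain ⟨L0, hL01, hL0⟩ := h
    refine ⟨L0 * Lk + L0, by nlinarith, fun t ht => ?_⟩
    have h1 : omegaM M ((2:ℝ) ^ (k + 1) * t) ≤ L0 * (omegaM M ((2:ℝ) ^ k * t) + 1) := by
      have : (2:ℝ) ^ (k + 1) * t = 2 * ((2:ℝ) ^ k * t) := by ring
      rw [this]
      exact hL0 _ (by positivity)
    have h2 := hLk t ht
    have h3 : 1 ≤ omegaM M t + 1 := by linarith [omega_nonneg M hM ht]
    nlinarith

/-- Corollary 3.3: `(ω1)` for associated weight functions is stable under `≈`. -/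
theorem stmt6 (M N : ℕ → ℝ) (hM : IsLC M) (hN : IsLC N) (hMN : Approx M N)
    (h : Omega1 (omegaM M)) : Omega1 (omegaM N) := by
  obtain ⟨A, hA1, hA⟩ := precsim_pow M N hM hN hMN.1
  obtain ⟨B, hB1, hB⟩ := precsim_pow N M hN hM hMN.2
  have hBpos : (0:ℝ) < B := lt_of_lt_of_le one_pos hB1
  obtain ⟨k, hk⟩ := pow_unbounded_of_one_lt (R := ℝ) (2 * A * B) one_lt_two
  obtain ⟨L, hL1, hL⟩ := omega1_iter M hM h k
  refine ⟨L, hL1, fun t ht => ?_⟩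
  have step1 : omegaM N (2 * t) ≤ omegaM M (A * (2 * t)) :=
    omega_compare M N hM hN hA1 hA (by positivity)
  have step2 : omegaM M (A * (2 * t)) ≤ omegaM M ((2:ℝ) ^ k * (t / B)) := by
    refine omega_mono M hM (by positivity) ?_
    rw [← sub_nonneg]
    have heq : (2:ℝ) ^ k * (t / B) - A * (2 * t) = (t / B) * ((2:ℝ) ^ k - 2 * A * B) := by
      field_simp
    rw [heq]
    exact mul_nonneg (by positivity) (by linarith)
  have step3 : omegaM M ((2:ℝ) ^ k * (t / B)) ≤ L * (omegaM M (t / B) + 1) :=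
    hL _ (by positivity)
  have step4 : omegaM M (t / B) ≤ omegaM N t := by
    have := omega_compare N M hN hM hB1 hB (t := t / B) (by positivity)
    rwa [mul_div_cancel₀ _ hBpos.ne'] at this
  have hN0 : 0 ≤ omegaM N t := omega_nonneg N hN ht
  nlinarith
end

section
/- Let ω : [0,∞) → [0,∞) be nondecreasing with ω(0) ≥ 0. Then the following are equivalent: (i) ω is equivalent to a subadditive function σ : [0,∞) → [0,∞), i.e. there exist σ with σ(s+t) ≤ σ(s) + σ(t) for all s, t ≥ 0 and a constant A ≥ 1 such that ω(t) ≤ A·σ(t) + A and σ(t) ≤ A·ω(t) + A for all t ≥ 0; (ii) there exist C ≥ 1 and D ≥ 1 such that ω(λ·t) ≤ C·λ·ω(t) + D·λ for all λ ≥ 1 and all t ≥ 0; (iii) ω is equivalent (in the same sense as in (i)) to a nondecreasing concave function F : [0,∞) → [0,∞). -/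
open Filter Real Asymptotics

/-- Auxiliary: the set of values at `t` of nonnegative affine majorants of `w`. -/
def affSet (w : ℝ → ℝ) (t : ℝ) : Set ℝ :=
  {v | ∃ a b : ℝ, 0 ≤ a ∧ 0 ≤ b ∧ (∀ s : ℝ, 0 ≤ s → w s ≤ a * s + b) ∧ v = a * t + b}

/-- Auxiliary: the infimum of nonnegative affine majorants of `w`. -/
noncomputable def affF (w : ℝ → ℝ) (t : ℝ) : ℝ := sInf (affSet w t)

/-- Lemma 4.1: equivalence of subadditivity up to equivalence, condition `(α0)`
in the rewritten form, and equivalence to a nondecreasing concave function. -/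
theorem stmt10 (w : ℝ → ℝ) (hpos : ∀ t : ℝ, 0 ≤ t → 0 ≤ w t)
    (hmono : MonotoneOn w (Set.Ici (0 : ℝ))) :
    List.TFAE [
      ∃ s : ℝ → ℝ, (∀ t : ℝ, 0 ≤ t → 0 ≤ s t) ∧
        (∀ x : ℝ, 0 ≤ x → ∀ y : ℝ, 0 ≤ y → s (x + y) ≤ s x + s y) ∧
        ∃ A : ℝ, 1 ≤ A ∧ ∀ t : ℝ, 0 ≤ t → w t ≤ A * s t + A ∧ s t ≤ A * w t + A,
      ∃ C : ℝ, 1 ≤ C ∧ ∃ D : ℝ, 1 ≤ D ∧ ∀ lam : ℝ, 1 ≤ lam → ∀ t : ℝ, 0 ≤ t →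
        w (lam * t) ≤ C * lam * w t + D * lam,
      ∃ F : ℝ → ℝ, (∀ t : ℝ, 0 ≤ t → 0 ≤ F t) ∧
        MonotoneOn F (Set.Ici (0 : ℝ)) ∧ ConcaveOn ℝ (Set.Ici (0 : ℝ)) F ∧
        ∃ A : ℝ, 1 ≤ A ∧ ∀ t : ℝ, 0 ≤ t → w t ≤ A * F t + A ∧ F t ≤ A * w t + A] := by
  tfae_have 1 → 2
  | ⟨s, hs0, hsub, A, hA, hAw⟩ => by
    have hA0 : (0:ℝ) ≤ A := le_trans zero_le_one hA
    refine ⟨2*A*A, by nlinarith, 3*A*A, by nlinarith, fun lam hlam t ht => ?_⟩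
    have key : ∀ n : ℕ, 1 ≤ n → s ((n:ℝ) * t) ≤ (n:ℝ) * s t := by
      intro n hn
      induction n, hn using Nat.le_induction with
      | base => simp
      | succ n hn ih =>
        have h1 : ((n+1:ℕ):ℝ) * t = (n:ℝ) * t + t := by push_cast; ring
        rw [h1]
        have := hsub ((n:ℝ)*t) (by positivity) t ht
        push_cast
        push_cast at ih
        linarith
    set n : ℕ := ⌈lam⌉₊ with hn
    have hn1 : 1 ≤ n := Nat.one_le_ceil_iff.mpr (by linarith)
    have hlamn : lam ≤ (n:ℝ) := Nat.le_ceil lam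
    have hn2 : (n:ℝ) ≤ 2 * lam := by
      have := (Nat.ceil_lt_add_one (by linarith : (0:ℝ) ≤ lam)).le
      linarith
    have hwm : w (lam * t) ≤ w ((n:ℝ) * t) := by
      refine hmono ?_ ?_ (mul_le_mul_of_nonneg_right hlamn ht)
      · exact Set.mem_Ici.mpr (by positivity)
      · exact Set.mem_Ici.mpr (by positivity)
    have h2 := (hAw ((n:ℝ) * t) (by positivity)).1
    have h3 := (hAw t ht).2
    have hst : 0 ≤ s t := hs0 t ht
    have h4 : s ((n:ℝ)*t) ≤ (n:ℝ) * s t := key n hn1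
    have h5 : (n:ℝ) * s t ≤ 2 * lam * s t := mul_le_mul_of_nonneg_right hn2 hst
    have h6 : 2 * A * lam * s t ≤ 2 * A * lam * (A * w t + A) :=
      mul_le_mul_of_nonneg_left h3 (by positivity)
    have hwt : 0 ≤ w t := hpos t ht
    have h7 : A ≤ A * A * lam := by nlinarith
    linarith [mul_le_mul_of_nonneg_left h4 hA0, mul_le_mul_of_nonneg_left h5 hA0]
  tfae_have 2 → 3
  | ⟨C, hC, D, hD, h⟩ => by
    have hw1 : 0 ≤ w 1 := hpos 1 zero_le_one
    set K : ℝ := C * w 1 + D with hK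
    have hK0 : 0 ≤ K := by nlinarith
    have hKmaj : ∀ s : ℝ, 0 ≤ s → w s ≤ K * s + K := by
      intro s hs
      rcases le_or_gt s 1 with hs1 | hs1
      · have := hmono (Set.mem_Ici.mpr hs) (Set.mem_Ici.mpr zero_le_one) hs1
        nlinarith [mul_nonneg hK0 hs]
      · have := h s hs1.le 1 zero_le_one
        rw [mul_one] at this
        nlinarith
    have hne : ∀ t : ℝ, (affSet w t).Nonempty :=
      fun t => ⟨K * t + K, K, K, hK0, hK0, hKmaj, rfl⟩
    have hmem_ge : ∀ t : ℝ, 0 ≤ t → ∀ v ∈ affSet w t, w t ≤ v := by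
      rintro t ht v ⟨a, b, ha, hb, hmaj, rfl⟩
      exact hmaj t ht
    have hbdd : ∀ t : ℝ, 0 ≤ t → BddBelow (affSet w t) :=
      fun t ht => ⟨w t, fun v hv => hmem_ge t ht v hv⟩
    have hFw : ∀ t : ℝ, 0 ≤ t → w t ≤ affF w t :=
      fun t ht => le_csInf (hne t) (hmem_ge t ht)
    refine ⟨affF w, fun t ht => le_trans (hpos t ht) (hFw t ht), ?_, ?_, ?_⟩
    · intro t1 ht1 t2 ht2 h12
      refine le_csInf (hne t2) ?_
      rintro v ⟨a, b, ha, hb, hmaj, rfl⟩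
      have h1 : affF w t1 ≤ a * t1 + b :=
        csInf_le (hbdd t1 ht1) ⟨a, b, ha, hb, hmaj, rfl⟩
      nlinarith [mul_le_mul_of_nonneg_left h12 ha]
    · refine ⟨convex_Ici 0, ?_⟩
      intro x hx y hy a b ha hb hab
      simp only [smul_eq_mul]
      refine le_csInf (hne _) ?_
      rintro v ⟨p, q, hp, hq, hmaj, rfl⟩
      have h1 : affF w x ≤ p * x + q :=
        csInf_le (hbdd x hx) ⟨p, q, hp, hq, hmaj, rfl⟩
      have h2 : affF w y ≤ p * y + q :=
        csInf_le (hbdd y hy) ⟨p, q, hp, hq, hmaj, rfl⟩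
      nlinarith [mul_le_mul_of_nonneg_left h1 ha, mul_le_mul_of_nonneg_left h2 hb]
    · refine ⟨2*C + 2*D + K, by nlinarith, fun t ht => ?_⟩
      have hwt : 0 ≤ w t := hpos t ht
      have hFt : 0 ≤ affF w t := le_trans hwt (hFw t ht)
      constructor
      · have : w t ≤ affF w t := hFw t ht
        nlinarith
      · rcases eq_or_lt_of_le ht with ht0 | ht0
        · have h0 : affF w t ≤ K * t + K :=
            csInf_le (hbdd t ht) ⟨K, K, hK0, hK0, hKmaj, rfl⟩
          rw [← ht0] at h0 ⊢
          have hw0 : 0 ≤ w 0 := hpos 0 le_rfl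
          nlinarith
        · set a : ℝ := (C * w t + D) / t with ha
          set b : ℝ := C * w t + D with hb
          have hb0 : 0 < b := by nlinarith
          have ha0 : 0 ≤ a := le_of_lt (div_pos hb0 ht0)
          have hmaj : ∀ s : ℝ, 0 ≤ s → w s ≤ a * s + b := by
            intro s hs
            rcases le_or_gt s t with hst | hst
            · have := hmono (Set.mem_Ici.mpr hs) (Set.mem_Ici.mpr ht) hst
              nlinarith [mul_nonneg ha0 hs]
            · have hlam : 1 ≤ s / t := (one_le_div ht0).mpr hst.le
              have := h (s / t) hlam t ht
              rw [div_mul_cancel₀ s (ne_of_gt ht0)] at this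
              have haeq : a * s = (s / t) * b := by
                field_simp [ha, hb]
                rw [ha, mul_assoc, mul_comm s t, ← mul_assoc, div_mul_cancel₀ b (ne_of_gt ht0), mul_comm]
              nlinarith [this, haeq]
          have h1 : affF w t ≤ a * t + b :=
            csInf_le (hbdd t ht) ⟨a, b, ha0, hb0.le, hmaj, rfl⟩
          have hat : a * t = b := div_mul_cancel₀ b (ne_of_gt ht0)
          nlinarith
  tfae_have 3 → 1
  | ⟨F, hF0, hFmono, hFconc, A, hA, hAF⟩ => by
    refine ⟨F, hF0, ?_, A, hA, hAF⟩
    intro x hx y hy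
    rcases eq_or_lt_of_le (by positivity : (0:ℝ) ≤ x + y) with hxy | hxy
    · have hx0 : x = 0 := by linarith
      have hy0 : y = 0 := by linarith
      subst hx0; subst hy0
      have := hF0 0 le_rfl
      simpa using by linarith
    · have hF00 : 0 ≤ F 0 := hF0 0 le_rfl
      have hmem0 : (0:ℝ) ∈ Set.Ici (0:ℝ) := Set.mem_Ici.mpr le_rfl
      have hmemxy : x + y ∈ Set.Ici (0:ℝ) := hxy.le
      set c : ℝ := x / (x + y) with hc
      set d : ℝ := y / (x + y) with hd
      have hc0 : 0 ≤ c := div_nonneg hx hxy.le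
      have hd0 : 0 ≤ d := div_nonneg hy hxy.le
      have hcd : d + c = 1 := by rw [hc, hd, ← add_div, add_comm y x, div_self (ne_of_gt hxy)]
      have hdc : c + d = 1 := by linarith
      have e1 := hFconc.2 hmem0 hmemxy hd0 hc0 hcd
      have e2 := hFconc.2 hmem0 hmemxy hc0 hd0 hdc
      simp only [smul_eq_mul, mul_zero, zero_add] at e1 e2
      have hcx : c * (x + y) = x := by rw [hc, div_mul_cancel₀ x (ne_of_gt hxy)]
      have hdy : d * (x + y) = y := by rw [hd, div_mul_cancel₀ y (ne_of_gt hxy)]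
      rw [hcx] at e1
      rw [hdy] at e2
      have hsum1 : c * F 0 + d * F 0 = F 0 := by rw [← add_mul, hdc, one_mul]
      have hsum2 : c * F (x + y) + d * F (x + y) = F (x + y) := by
        rw [← add_mul, hdc, one_mul]
      linarith [e1, e2, hsum1, hsum2, hF00]
  tfae_finish
end
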